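/- Let T(ϑ₂, ϑ₁) = ((ϑ₂ − ϑ₁)/2)·exp(−⟨φ⟩·e^{ϑ₂}) for ϑ₂ > ϑ₁, where ⟨φ⟩ > 0 is fixed. Then sup_{ϑ' > ϑ} T(ϑ', ϑ) = (δ(ϑ)/2)·exp(−1/δ(ϑ)), where δ(ϑ) is the unique positive solution of δ·e^δ = e^{−ϑ}/⟨φ⟩, and the supremum is attained at ϑ' = ϑ + δ(ϑ). -/
import Mathlib


/-- For `T(ϑ',ϑ) = ((ϑ'−ϑ)/2) exp(−⟨φ⟩ e^{ϑ'})`, the supremum over `ϑ' > ϑ` equals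
`(δ/2) exp(−1/δ)` where `δ e^δ = e^{−ϑ}/⟨φ⟩`, and it is attained at `ϑ' = ϑ + δ`. -/
theorem stmt15 (φ ϑ δ : ℝ) (hφ : 0 < φ) (hδ : 0 < δ)
    (hδeq : δ * Real.exp δ = Real.exp (-ϑ) / φ) :
    IsGreatest {r : ℝ | ∃ ϑ' > ϑ, r = (ϑ' - ϑ) / 2 * Real.exp (-φ * Real.exp ϑ')}
      (δ / 2 * Real.exp (-1 / δ)) ∧
    (ϑ + δ - ϑ) / 2 * Real.exp (-φ * Real.exp (ϑ + δ)) =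
      δ / 2 * Real.exp (-1 / δ) := by
  obtain ⟨c, hc⟩ : ∃ c : ℝ, c = φ * Real.exp ϑ := ⟨_, rfl⟩
  have hcpos : 0 < c := hc ▸ mul_pos hφ (Real.exp_pos ϑ)
  have hkey : c * Real.exp δ = 1 / δ := by
    have h1 : δ * Real.exp δ * φ = Real.exp (-ϑ) := by
      field_simp at hδeq; linarith [hδeq]
    have h2 : Real.exp (-ϑ) * Real.exp ϑ = 1 := by
      rw [← Real.exp_add]; simp
    have h3 : δ * (c * Real.exp δ) = 1 := by
      rw [hc]; nlinarith [h1, h2]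
    field_simp
    nlinarith [h3]
  have heq : (ϑ + δ - ϑ) / 2 * Real.exp (-φ * Real.exp (ϑ + δ)) =
      δ / 2 * Real.exp (-1 / δ) := by
    have h : -φ * Real.exp (ϑ + δ) = -1 / δ := by
      rw [Real.exp_add]
      have h' : φ * Real.exp ϑ * Real.exp δ = 1 / δ := by rw [← hc]; exact hkey
      linear_combination -h'
    rw [show ϑ + δ - ϑ = δ by ring, h]
  refine ⟨⟨⟨ϑ + δ, by linarith, heq.symm⟩, ?_⟩, heq⟩
  rintro r ⟨ϑ', hϑ', rfl⟩
  obtain ⟨t, ht⟩ : ∃ t : ℝ, t = ϑ' - ϑ := ⟨_, rfl⟩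
  have htpos : 0 < t := by rw [ht]; linarith
  have hφe : -φ * Real.exp ϑ' = -(c * Real.exp t) := by
    have h4 : Real.exp ϑ' = Real.exp ϑ * Real.exp t := by
      rw [← Real.exp_add, ht]; ring_nf
    rw [h4, hc]; ring
  rw [← ht, hφe]
  have hlog : Real.log t - c * Real.exp t ≤ Real.log δ - c * Real.exp δ := by
    have h1 : Real.log (t / δ) ≤ t / δ - 1 :=
      Real.log_le_sub_one_of_pos (div_pos htpos hδ)
    have h2 : Real.log (t / δ) = Real.log t - Real.log δ :=
      Real.log_div (ne_of_gt htpos) (ne_of_gt hδ)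
    have h3 : (t - δ) + 1 ≤ Real.exp (t - δ) := Real.add_one_le_exp _
    have h4 : Real.exp t = Real.exp δ * Real.exp (t - δ) := by
      rw [← Real.exp_add]; ring_nf
    have h5 : c * Real.exp δ * (t - δ) ≤ c * Real.exp t - c * Real.exp δ := by
      rw [h4]
      nlinarith [mul_pos hcpos (Real.exp_pos δ), h3]
    have h6 : c * Real.exp δ * (t - δ) = t / δ - 1 := by
      rw [hkey]; field_simp
    linarith [h1, h2.ge, h2.le, h5, h6.ge, h6.le]
  have hmain : t * Real.exp (-(c * Real.exp t)) ≤ δ * Real.exp (-(c * Real.exp δ)) := by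
    have e1 : t * Real.exp (-(c * Real.exp t)) = Real.exp (Real.log t - c * Real.exp t) := by
      rw [Real.exp_sub, Real.exp_log htpos, Real.exp_neg]; ring
    have e2 : δ * Real.exp (-(c * Real.exp δ)) = Real.exp (Real.log δ - c * Real.exp δ) := by
      rw [Real.exp_sub, Real.exp_log hδ, Real.exp_neg]; ring
    rw [e1, e2]
    exact Real.exp_le_exp.mpr hlog
  have h7 : -(c * Real.exp δ) = -1 / δ := by rw [hkey]; ring
  rw [h7] at hmain
  linarith [hmain]
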